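/- Let m, d be natural numbers, E > 0, cᵢ > 0 and xᵢ > 0 for i = 1, …, m, bᵢ ∈ ℝ^d, p ∈ ℝ^d, and set K = Σ_{i=1}^m (E/cᵢ) xᵢ bᵢ bᵢᵀ. Then for every u ∈ ℝ^d and every q ∈ ℝ^m satisfying Σ_{i=1}^m qᵢ bᵢ = p, one has 2⟨p, u⟩ − ⟨u, K u⟩ ≤ Σ_{i=1}^m (cᵢ/(E xᵢ)) qᵢ². -/

import Mathlib

open Matrix

/-- Weak duality: for any displacement `u` and any force vector `q` in
equilibrium with the load `p`, the compliance objective is bounded by the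
complementary energy. -/
theorem compliance_weak_duality (m d : ℕ)
    (E : ℝ) (hE : 0 < E) (c x : Fin m → ℝ)
    (hc : ∀ i, 0 < c i) (hx : ∀ i, 0 < x i)
    (b : Fin m → Fin d → ℝ) (p : Fin d → ℝ)
    (K : Matrix (Fin d) (Fin d) ℝ)
    (hK : K = ∑ i, (E / c i * x i) • Matrix.vecMulVec (b i) (b i))
    (u : Fin d → ℝ) (q : Fin m → ℝ) (hq : (∑ i, q i • b i) = p) :
    2 * (p ⬝ᵥ u) - u ⬝ᵥ K.mulVec u ≤ ∑ i, c i / (E * x i) * q i ^ 2 := by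
  have hpu : p ⬝ᵥ u = ∑ i, q i * (b i ⬝ᵥ u) := by
    rw [← hq]
    simp [dotProduct, Finset.sum_mul, Finset.mul_sum]
    rw [Finset.sum_comm]
    congr 1; ext i; congr 1; ext j; ring
  have hsum : ∀ (s : Finset (Fin m)),
      (∑ i ∈ s, (E / c i * x i) • Matrix.vecMulVec (b i) (b i)).mulVec u
        = ∑ i ∈ s, ((E / c i * x i) • Matrix.vecMulVec (b i) (b i)).mulVec u := by
    intro s
    induction s using Finset.induction with
    | empty => simp [Matrix.mulVec_zero]
    | insert _ _ h ih =>
        rw [Finset.sum_insert h, Finset.sum_insert h, Matrix.add_mulVec, ih]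
  have hKu : u ⬝ᵥ K.mulVec u = ∑ i, (E / c i * x i) * (b i ⬝ᵥ u) ^ 2 := by
    have hdot : ∀ (v : Fin m → Fin d → ℝ), u ⬝ᵥ (∑ i, v i) = ∑ i, u ⬝ᵥ v i := by
      intro v
      simp only [dotProduct, Finset.sum_apply, Finset.mul_sum]
      exact Finset.sum_comm
    subst hK
    rw [hsum, hdot]
    refine Finset.sum_congr rfl fun i _ => ?_
    rw [Matrix.smul_mulVec, dotProduct_smul, smul_eq_mul]
    congr 1
    simp only [Matrix.mulVec, Matrix.vecMulVec_apply, dotProduct, sq,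
      Finset.sum_mul_sum]
    refine Finset.sum_congr rfl fun j _ => ?_
    rw [Finset.mul_sum]
    refine Finset.sum_congr rfl fun k _ => ?_
    ring
  rw [hpu, hKu, Finset.mul_sum, ← Finset.sum_sub_distrib]
  apply Finset.sum_le_sum
  intro i _
  have hci := hc i
  have hxi := hx i
  have hα : 0 < E / c i * x i := by positivity
  have hinv : c i / (E * x i) = (E / c i * x i)⁻¹ := by
    field_simp
  rw [hinv]
  set α := E / c i * x i
  set t := b i ⬝ᵥ u
  nlinarith [sq_nonneg (q i - α * t), inv_pos.mpr hα, mul_inv_cancel₀ hα.ne',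
    mul_nonneg (inv_pos.mpr hα).le (sq_nonneg (q i - α * t))]
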